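/- Let α, β > 0 and k, ℓ, n ∈ ℕ. Let P = {τ₁,…,τₙ} be polygonal curves and for each i let τ̂_i ∈ Δ_ℓ satisfy d_F(τ_i, τ̂_i) ≤ α · inf_{π ∈ Δ_ℓ} d_F(τ_i, π); write P̂ = {τ̂₁,…,τ̂ₙ}. Let C ⊆ Δ_ℓ with |C| = k. (a) If cost_∞(P̂, C) ≤ β · opt^{(∞)}_{k,ℓ}(P̂), then D_∞ := cost_∞(P̂, C) + max_{1≤i≤n} d_F(τ_i, τ̂_i) satisfies cost_∞(P, C) ≤ D_∞ ≤ (α + β + αβ) · opt^{(∞)}_{k,ℓ}(P). (b) If cost₁(P̂, C) ≤ β · opt^{(1)}_{k,ℓ}(P̂), then D₁ := cost₁(P̂, C) + Σ_{1≤i≤n} d_F(τ_i, τ̂_i) satisfies cost₁(P, C) ≤ D₁ ≤ (α + β + αβ) · opt^{(1)}_{k,ℓ}(P). -/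

import Mathlib

open Set

/-- A valid reparametrization of `[0,1]`: a continuous strictly increasing
bijection of `[0,1]` onto itself fixing the endpoints. -/
def IsReparam (f : ℝ → ℝ) : Prop :=
  ContinuousOn f (Set.Icc 0 1) ∧ StrictMonoOn f (Set.Icc 0 1) ∧ f 0 = 0 ∧ f 1 = 1

/-- The Fréchet distance between two curves `τ, π : [0,1] → ℝ`:
`inf_f sup_{t ∈ [0,1]} |τ(f(t)) - π(t)|` over reparametrizations `f`. -/
noncomputable def frechetDist (τ π : ℝ → ℝ) : ℝ :=
  ⨅ f : {f : ℝ → ℝ // IsReparam f}, ⨆ t : Set.Icc (0:ℝ) 1, |τ (f.1 ↑t) - π ↑t|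

/-- `τ` is the polygonal curve on `[0,1]` with the `m` vertices `w 0, …, w (m-1)`
attained at parameters `t 0 = 0 < t 1 < … < t (m-1) = 1`, obtained by linear
interpolation. -/
def IsPolyOn (τ : ℝ → ℝ) (m : ℕ) (t w : ℕ → ℝ) : Prop :=
  2 ≤ m ∧ t 0 = 0 ∧ t (m - 1) = 1 ∧ (∀ i, i + 1 < m → t i < t (i + 1)) ∧
  (∀ i, i + 1 < m → ∀ u ∈ Set.Icc (t i) (t (i + 1)),
    τ u = w i + (u - t i) / (t (i + 1) - t i) * (w (i + 1) - w i))

/-- `τ` is a polygonal curve (with finitely many vertices). -/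
def IsPolyCurve (τ : ℝ → ℝ) : Prop := ∃ m t w, IsPolyOn τ m t w

/-- `c` is a polygonal curve with at most `ℓ` vertices, i.e. an element of `Δ_ℓ`. -/
def InDeltaL (ℓ : ℕ) (c : ℝ → ℝ) : Prop := ∃ m t w, m ≤ ℓ ∧ IsPolyOn c m t w

/-- General position of the vertex sequence `w 0, …, w (m-1)`: pairwise distinct
vertex values, pairwise distinct differences, and no vertex inside the closed
interval spanned by its two neighbours. -/
def GenPos (m : ℕ) (w : ℕ → ℝ) : Prop :=
  (∀ i j, i < m → j < m → i ≠ j → w i ≠ w j) ∧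
  (∀ i j p q, i < m → j < m → p < m → q < m → i ≠ j → p ≠ q →
      (i, j) ≠ (p, q) → w i - w j ≠ w p - w q) ∧
  (∀ i, i + 2 < m → w (i + 1) ∉ Set.uIcc (w i) (w (i + 2)))

/-- The parameters `s 0 = 0 < s 1 < … < s (ℓ-1) = 1` define a `δ`-signature of the
curve `τ` (Definition 3.3 of the paper, `0`-indexed): non-degeneracy,
direction-preservation, minimum edge length and range conditions. -/
def IsSignature (δ : ℝ) (τ : ℝ → ℝ) (ℓ : ℕ) (s : ℕ → ℝ) : Prop :=
  2 ≤ ℓ ∧ s 0 = 0 ∧ s (ℓ - 1) = 1 ∧ (∀ i, i + 1 < ℓ → s i < s (i + 1)) ∧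
  (∀ i, 1 ≤ i → i + 1 < ℓ → τ (s i) ∉ Set.uIcc (τ (s (i - 1))) (τ (s (i + 1)))) ∧
  (∀ i, i + 1 < ℓ → ∀ a b : ℝ, s i ≤ a → a < b → b ≤ s (i + 1) →
      (τ (s i) < τ (s (i + 1)) → τ a - τ b ≤ 2 * δ) ∧
      (τ (s (i + 1)) < τ (s i) → τ b - τ a ≤ 2 * δ)) ∧
  (∀ i, 1 ≤ i → i + 3 ≤ ℓ → 2 * δ < |τ (s (i + 1)) - τ (s i)|) ∧
  δ < |τ (s 1) - τ (s 0)| ∧ δ < |τ (s (ℓ - 1)) - τ (s (ℓ - 2))| ∧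
  (∀ i, 1 ≤ i → i + 3 ≤ ℓ → ∀ a ∈ Set.Icc (s i) (s (i + 1)),
      τ a ∈ Set.uIcc (τ (s i)) (τ (s (i + 1)))) ∧
  (2 < ℓ → ∀ a ∈ Set.Icc (s 0) (s 1),
      τ a ∈ Set.uIcc (τ (s 0)) (τ (s 1)) ∪ Set.Icc (τ (s 0) - δ) (τ (s 0) + δ)) ∧
  (2 < ℓ → ∀ a ∈ Set.Icc (s (ℓ - 2)) (s (ℓ - 1)),
      τ a ∈ Set.uIcc (τ (s (ℓ - 2))) (τ (s (ℓ - 1))) ∪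
        Set.Icc (τ (s (ℓ - 1)) - δ) (τ (s (ℓ - 1)) + δ)) ∧
  (ℓ = 2 → ∀ a ∈ Set.Icc (s 0) (s 1),
      τ a ∈ Set.uIcc (τ (s 0)) (τ (s 1)) ∪ Set.Icc (τ (s 0) - δ) (τ (s 0) + δ) ∪
        Set.Icc (τ (s 1) - δ) (τ (s 1) + δ))

/-- `k`-center cost: `max_i min_j d_F(τ i, C j)`. -/
noncomputable def costC (n k : ℕ) (τ C : ℕ → ℝ → ℝ) : ℝ :=
  ⨆ i : Fin n, ⨅ j : Fin k, frechetDist (τ i) (C j)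

/-- `k`-median cost: `Σ_i min_j d_F(τ i, C j)`. -/
noncomputable def costM (n k : ℕ) (τ C : ℕ → ℝ → ℝ) : ℝ :=
  ∑ i ∈ Finset.range n, ⨅ j : Fin k, frechetDist (τ i) (C j)

/-- Optimal `(k,ℓ)`-center cost. -/
noncomputable def optC (n k ℓ : ℕ) (τ : ℕ → ℝ → ℝ) : ℝ :=
  sInf {d : ℝ | ∃ C : ℕ → ℝ → ℝ, (∀ j, j < k → InDeltaL ℓ (C j)) ∧ d = costC n k τ C}

/-- Optimal `(k,ℓ)`-median cost. -/
noncomputable def optM (n k ℓ : ℕ) (τ : ℕ → ℝ → ℝ) : ℝ :=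
  sInf {d : ℝ | ∃ C : ℕ → ℝ → ℝ, (∀ j, j < k → InDeltaL ℓ (C j)) ∧ d = costM n k τ C}

def Bd (φ : ℝ → ℝ) : Prop := ∃ M, ∀ u ∈ Set.Icc (0:ℝ) 1, |φ u| ≤ M

lemma isReparam_id : IsReparam id :=
  ⟨continuousOn_id, fun _ _ _ _ h => h, rfl, rfl⟩

instance : Nonempty {f : ℝ → ℝ // IsReparam f} := ⟨⟨id, isReparam_id⟩⟩

lemma reparam_mem {f : ℝ → ℝ} (hf : IsReparam f) {t : ℝ} (ht : t ∈ Set.Icc (0:ℝ) 1) :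
    f t ∈ Set.Icc (0:ℝ) 1 := by
  have h0 : (0:ℝ) ∈ Set.Icc (0:ℝ) 1 := ⟨le_refl 0, zero_le_one⟩
  have h1 : (1:ℝ) ∈ Set.Icc (0:ℝ) 1 := ⟨zero_le_one, le_refl 1⟩
  constructor
  · rw [← hf.2.2.1]; exact hf.2.1.monotoneOn h0 ht ht.1
  · rw [← hf.2.2.2]; exact hf.2.1.monotoneOn ht h1 ht.2

lemma sup_nonneg'' (τ π f : ℝ → ℝ) : 0 ≤ ⨆ t : Set.Icc (0:ℝ) 1, |τ (f ↑t) - π ↑t| :=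
  Real.iSup_nonneg fun _ => abs_nonneg _

lemma frechetDist_nonneg (τ π : ℝ → ℝ) : 0 ≤ frechetDist τ π :=
  Real.iInf_nonneg fun f => sup_nonneg'' τ π f.1

lemma bddAbove_aux {τ π f : ℝ → ℝ} (hτ : Bd τ) (hπ : Bd π) (hf : IsReparam f) :
    BddAbove (Set.range fun t : Set.Icc (0:ℝ) 1 => |τ (f ↑t) - π ↑t|) := by
  obtain ⟨M₁, h₁⟩ := hτ; obtain ⟨M₂, h₂⟩ := hπ
  refine ⟨M₁ + M₂, ?_⟩
  rintro x ⟨t, rfl⟩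
  calc |τ (f ↑t) - π ↑t| ≤ |τ (f ↑t)| + |π ↑t| := abs_sub _ _
    _ ≤ M₁ + M₂ := add_le_add (h₁ _ (reparam_mem hf t.2)) (h₂ _ t.2)

lemma frechetDist_le_sup {τ π : ℝ → ℝ} {f : ℝ → ℝ} (hf : IsReparam f) :
    frechetDist τ π ≤ ⨆ t : Set.Icc (0:ℝ) 1, |τ (f ↑t) - π ↑t| := by
  have hb : BddBelow (Set.range fun g : {f : ℝ → ℝ // IsReparam f} =>
      ⨆ t : Set.Icc (0:ℝ) 1, |τ (g.1 ↑t) - π ↑t|) :=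
    ⟨0, by rintro x ⟨g, rfl⟩; exact sup_nonneg'' τ π g.1⟩
  exact ciInf_le hb (⟨f, hf⟩ : {f : ℝ → ℝ // IsReparam f})

lemma exists_reparam_lt {τ π : ℝ → ℝ} {a : ℝ} (h : frechetDist τ π < a) :
    ∃ f : ℝ → ℝ, IsReparam f ∧ (⨆ t : Set.Icc (0:ℝ) 1, |τ (f ↑t) - π ↑t|) < a := by
  obtain ⟨f, hf⟩ := exists_lt_of_ciInf_lt h
  exact ⟨f.1, f.2, hf⟩

lemma exists_inverse {f : ℝ → ℝ} (hf : IsReparam f) :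
    ∃ g : ℝ → ℝ, IsReparam g ∧ ∀ t ∈ Set.Icc (0:ℝ) 1, g t ∈ Set.Icc (0:ℝ) 1 ∧ f (g t) = t := by
  classical
  set F : ℝ → ℝ := fun x => if x < 0 ∨ 1 < x then x else f x with hF
  have hFicc : ∀ x ∈ Set.Icc (0:ℝ) 1, F x = f x := by
    intro x hx; simp only [hF]
    rw [if_neg]; push_neg; exact ⟨hx.1, hx.2⟩
  have hmem : ∀ x ∈ Set.Icc (0:ℝ) 1, f x ∈ Set.Icc (0:ℝ) 1 := fun x hx => reparam_mem hf hx
  have hmono : StrictMono F := by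
    intro x y hxy
    by_cases hx : x < 0
    · rw [hF]; simp only [if_pos (Or.inl hx)]
      by_cases hy : y < 0
      · simp only [if_pos (Or.inl hy)]; exact hxy
      · by_cases hy1 : 1 < y
        · simp only [if_pos (Or.inr hy1)]; exact hxy
        · push_neg at hy hy1
          rw [if_neg (by push_neg; exact ⟨hy, hy1⟩)]
          exact lt_of_lt_of_le hx (hmem y ⟨hy, hy1⟩).1
    · by_cases hx1 : 1 < x
      · have hy1 : 1 < y := lt_trans hx1 hxy
        rw [hF]; simp only [if_pos (Or.inr hx1), if_pos (Or.inr hy1)]; exact hxy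
      · push_neg at hx hx1
        have hxm : x ∈ Set.Icc (0:ℝ) 1 := ⟨hx, hx1⟩
        rw [hF]; simp only [if_neg (show ¬(x < 0 ∨ 1 < x) by push_neg; exact ⟨hx, hx1⟩)]
        by_cases hy1 : 1 < y
        · rw [if_pos (Or.inr hy1)]
          exact lt_of_le_of_lt (hmem x hxm).2 hy1
        · have hy : ¬ (y < 0) := by push_neg; exact le_trans hx hxy.le
          push_neg at hy hy1
          rw [if_neg (by push_neg; exact ⟨hy, hy1⟩)]
          exact hf.2.1 hxm ⟨hy, hy1⟩ hxy
  have hsurj : Function.Surjective F := by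
    intro y
    by_cases hy : y ∈ Set.Icc (0:ℝ) 1
    · have : Set.Icc (f 0) (f 1) ⊆ f '' Set.Icc 0 1 :=
        intermediate_value_Icc zero_le_one hf.1
      rw [hf.2.2.1, hf.2.2.2] at this
      obtain ⟨x, hx, hfx⟩ := this hy
      exact ⟨x, (hFicc x hx).trans hfx⟩
    · refine ⟨y, ?_⟩
      show (if y < 0 ∨ 1 < y then y else f y) = y
      rw [if_pos]
      simp only [Set.mem_Icc, not_and_or, not_le] at hy
      exact hy
  set e := StrictMono.orderIsoOfSurjective F hmono hsurj with he
  set g : ℝ → ℝ := fun y => e.symm y with hg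
  have hge : ∀ y, F (g y) = y := fun y => e.apply_symm_apply y
  have hgmono : StrictMono g := fun x y hxy => e.symm.strictMono hxy
  have hg0 : g 0 = 0 := by
    have : F 0 = 0 := by rw [hFicc 0 ⟨le_refl 0, zero_le_one⟩, hf.2.2.1]
    have := congrArg e.symm this
    rw [show e.symm (F 0) = 0 from e.symm_apply_apply 0] at this
    exact this.symm
  have hg1 : g 1 = 1 := by
    have : F 1 = 1 := by rw [hFicc 1 ⟨zero_le_one, le_refl 1⟩, hf.2.2.2]
    have := congrArg e.symm this
    rw [show e.symm (F 1) = 1 from e.symm_apply_apply 1] at this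
    exact this.symm
  have hgmem : ∀ t ∈ Set.Icc (0:ℝ) 1, g t ∈ Set.Icc (0:ℝ) 1 := by
    intro t ht
    constructor
    · rw [← hg0]; exact hgmono.monotone ht.1
    · rw [← hg1]; exact hgmono.monotone ht.2
  refine ⟨g, ⟨(e.symm.continuous).continuousOn, hgmono.strictMonoOn _, hg0, hg1⟩, ?_⟩
  intro t ht
  exact ⟨hgmem t ht, by rw [← hFicc _ (hgmem t ht), hge]⟩

lemma frechet_symm_le {τ π : ℝ → ℝ} (hτ : Bd τ) (hπ : Bd π) :
    frechetDist π τ ≤ frechetDist τ π := by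
  refine le_of_forall_pos_le_add fun ε hε => ?_
  obtain ⟨f, hf, hfs⟩ := exists_reparam_lt (show frechetDist τ π < frechetDist τ π + ε by linarith)
  obtain ⟨g, hg, hginv⟩ := exists_inverse hf
  have h1 : frechetDist π τ ≤ ⨆ t : Set.Icc (0:ℝ) 1, |π (g ↑t) - τ ↑t| := frechetDist_le_sup hg
  have h2 : (⨆ t : Set.Icc (0:ℝ) 1, |π (g ↑t) - τ ↑t|) ≤
      ⨆ t : Set.Icc (0:ℝ) 1, |τ (f ↑t) - π ↑t| := by
    refine Real.iSup_le (fun t => ?_) (sup_nonneg'' τ π f)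
    obtain ⟨hmem, hft⟩ := hginv t t.2
    have : |π (g ↑t) - τ ↑t| = |τ (f (g ↑t)) - π (g ↑t)| := by rw [hft]; rw [abs_sub_comm]
    rw [this]
    exact le_ciSup (bddAbove_aux hτ hπ hf) (⟨g ↑t, hmem⟩ : Set.Icc (0:ℝ) 1)
  linarith

lemma isReparam_comp {f g : ℝ → ℝ} (hf : IsReparam f) (hg : IsReparam g) :
    IsReparam (fun x => f (g x)) := by
  have hmaps : Set.MapsTo g (Set.Icc (0:ℝ) 1) (Set.Icc (0:ℝ) 1) := fun x hx => reparam_mem hg hx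
  refine ⟨hf.1.comp hg.1 hmaps, ?_, ?_, ?_⟩
  · exact fun x hx y hy hxy => hf.2.1 (hmaps hx) (hmaps hy) (hg.2.1 hx hy hxy)
  · show f (g 0) = 0
    rw [hg.2.2.1, hf.2.2.1]
  · show f (g 1) = 1
    rw [hg.2.2.2, hf.2.2.2]

lemma frechet_triangle {τ σ π : ℝ → ℝ} (hτ : Bd τ) (hσ : Bd σ) (hπ : Bd π) :
    frechetDist τ π ≤ frechetDist τ σ + frechetDist σ π := by
  refine le_of_forall_pos_le_add fun ε hε => ?_
  obtain ⟨f, hf, hfs⟩ := exists_reparam_lt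
    (show frechetDist τ σ < frechetDist τ σ + ε / 2 by linarith)
  obtain ⟨g, hg, hgs⟩ := exists_reparam_lt
    (show frechetDist σ π < frechetDist σ π + ε / 2 by linarith)
  have hcomp := isReparam_comp hf hg
  have h1 : frechetDist τ π ≤ ⨆ t : Set.Icc (0:ℝ) 1, |τ (f (g ↑t)) - π ↑t| :=
    frechetDist_le_sup hcomp
  have h2 : (⨆ t : Set.Icc (0:ℝ) 1, |τ (f (g ↑t)) - π ↑t|) ≤
      (⨆ t : Set.Icc (0:ℝ) 1, |τ (f ↑t) - σ ↑t|) + ⨆ t : Set.Icc (0:ℝ) 1, |σ (g ↑t) - π ↑t| := by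
    refine Real.iSup_le (fun t => ?_)
      (add_nonneg (sup_nonneg'' τ σ f) (sup_nonneg'' σ π g))
    have hgt : g ↑t ∈ Set.Icc (0:ℝ) 1 := reparam_mem hg t.2
    calc |τ (f (g ↑t)) - π ↑t| ≤ |τ (f (g ↑t)) - σ (g ↑t)| + |σ (g ↑t) - π ↑t| :=
          abs_sub_le _ _ _
      _ ≤ (⨆ s : Set.Icc (0:ℝ) 1, |τ (f ↑s) - σ ↑s|) + ⨆ s : Set.Icc (0:ℝ) 1, |σ (g ↑s) - π ↑s| :=
          add_le_add (le_ciSup (bddAbove_aux hτ hσ hf) (⟨g ↑t, hgt⟩ : Set.Icc (0:ℝ) 1))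
            (le_ciSup (bddAbove_aux hσ hπ hg) t)
  linarith

lemma exists_piece {m : ℕ} {t : ℕ → ℝ} (hm : 2 ≤ m) (ht0 : t 0 = 0) (htm : t (m - 1) = 1)
    (hmono : ∀ i, i + 1 < m → t i < t (i + 1)) {u : ℝ} (hu : u ∈ Set.Icc (0:ℝ) 1) :
    ∃ i, i + 1 < m ∧ u ∈ Set.Icc (t i) (t (i + 1)) := by
  classical
  set s := Finset.filter (fun i => t i ≤ u) (Finset.range (m - 1)) with hs
  have hne : s.Nonempty := by
    refine ⟨0, Finset.mem_filter.2 ⟨Finset.mem_range.2 (by omega), ?_⟩⟩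
    rw [ht0]; exact hu.1
  set i := s.max' hne with hi
  have him : i ∈ s := s.max'_mem hne
  have hilt : i < m - 1 := Finset.mem_range.1 (Finset.mem_filter.1 him).1
  have hti : t i ≤ u := (Finset.mem_filter.1 him).2
  refine ⟨i, by omega, hti, ?_⟩
  by_contra hcon
  push_neg at hcon
  have hi1 : i + 1 < m - 1 := by
    rcases Nat.lt_or_ge (i + 1) (m - 1) with h | h
    · exact h
    · exfalso
      have : i + 1 = m - 1 := by omega
      rw [this, htm] at hcon
      exact absurd hu.2 (not_le.2 hcon)
  have : i + 1 ∈ s := Finset.mem_filter.2 ⟨Finset.mem_range.2 hi1, hcon.le⟩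
  have := s.le_max' _ this
  omega

lemma bd_of_isPolyOn {c : ℝ → ℝ} {m : ℕ} {t w : ℕ → ℝ} (h : IsPolyOn c m t w) : Bd c := by
  obtain ⟨hm, ht0, htm, hmono, heq⟩ := h
  refine ⟨∑ j ∈ Finset.range m, 2 * |w j|, fun u hu => ?_⟩
  obtain ⟨i, hi, hui⟩ := exists_piece hm ht0 htm hmono hu
  rw [heq i hi u hui]
  have hd : 0 < t (i + 1) - t i := sub_pos.2 (hmono i hi)
  have hr0 : 0 ≤ (u - t i) / (t (i + 1) - t i) := div_nonneg (by linarith [hui.1]) hd.le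
  have hr1 : (u - t i) / (t (i + 1) - t i) ≤ 1 := by
    rw [div_le_one hd]; linarith [hui.2]
  have key : |w i + (u - t i) / (t (i + 1) - t i) * (w (i + 1) - w i)| ≤
      |w i| + |w (i + 1) - w i| := by
    calc |w i + (u - t i) / (t (i + 1) - t i) * (w (i + 1) - w i)|
        ≤ |w i| + |(u - t i) / (t (i + 1) - t i) * (w (i + 1) - w i)| := abs_add_le _ _
      _ ≤ |w i| + |w (i + 1) - w i| := by
          rw [abs_mul]
          refine add_le_add_right (mul_le_of_le_one_left (abs_nonneg _) ?_) _
          rw [abs_of_nonneg hr0]; exact hr1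
  refine key.trans ?_
  have hsub : ({i, i + 1} : Finset ℕ) ⊆ Finset.range m := by
    intro x hx
    rcases Finset.mem_insert.1 hx with rfl | hx
    · exact Finset.mem_range.2 (by omega)
    · rw [Finset.mem_singleton.1 hx]; exact Finset.mem_range.2 hi
  have hpair : ∑ j ∈ ({i, i + 1} : Finset ℕ), 2 * |w j| = 2 * |w i| + 2 * |w (i + 1)| :=
    Finset.sum_pair (by omega)
  have hle : ∑ j ∈ ({i, i + 1} : Finset ℕ), 2 * |w j| ≤ ∑ j ∈ Finset.range m, 2 * |w j| :=
    Finset.sum_le_sum_of_subset_of_nonneg hsub (fun j _ _ => by positivity)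
  rw [hpair] at hle
  calc |w i| + |w (i + 1) - w i| ≤ 2 * |w i| + 2 * |w (i + 1)| := by
        have := abs_sub (w (i + 1)) (w i)
        have h1 := abs_nonneg (w i)
        have h2 := abs_nonneg (w (i + 1))
        linarith [abs_sub (w (i+1)) (w i)]
    _ ≤ ∑ j ∈ Finset.range m, 2 * |w j| := hle

lemma bd_of_inDeltaL {ℓ : ℕ} {c : ℝ → ℝ} (h : InDeltaL ℓ c) : Bd c := by
  obtain ⟨m, t, w, _, hp⟩ := h
  exact bd_of_isPolyOn hp

lemma bd_of_isPolyCurve {c : ℝ → ℝ} (h : IsPolyCurve c) : Bd c := by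
  obtain ⟨m, t, w, hp⟩ := h
  exact bd_of_isPolyOn hp

lemma iInf_dist_nonneg {k : ℕ} (σ : ℝ → ℝ) (C : ℕ → ℝ → ℝ) :
    0 ≤ ⨅ j : Fin k, frechetDist σ (C j) :=
  Real.iInf_nonneg fun j => frechetDist_nonneg _ _

lemma costC_nonneg (n k : ℕ) (τ C : ℕ → ℝ → ℝ) : 0 ≤ costC n k τ C :=
  Real.iSup_nonneg fun i => iInf_dist_nonneg _ _

lemma costM_nonneg (n k : ℕ) (τ C : ℕ → ℝ → ℝ) : 0 ≤ costM n k τ C :=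
  Finset.sum_nonneg fun i _ => iInf_dist_nonneg _ _

lemma optC_nonneg (n k ℓ : ℕ) (τ : ℕ → ℝ → ℝ) : 0 ≤ optC n k ℓ τ :=
  Real.sInf_nonneg (by rintro d ⟨C', _, rfl⟩; exact costC_nonneg _ _ _ _)

lemma optM_nonneg (n k ℓ : ℕ) (τ : ℕ → ℝ → ℝ) : 0 ≤ optM n k ℓ τ :=
  Real.sInf_nonneg (by rintro d ⟨C', _, rfl⟩; exact costM_nonneg _ _ _ _)

/-- min over centers triangle inequality -/
lemma iInf_le_dist_add {k : ℕ} (hk : 0 < k) {σ φ : ℝ → ℝ} (C' : ℕ → ℝ → ℝ)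
    (hσ : Bd σ) (hφ : Bd φ) (hC' : ∀ j, j < k → Bd (C' j)) :
    (⨅ j : Fin k, frechetDist σ (C' j)) ≤
      frechetDist σ φ + ⨅ j : Fin k, frechetDist φ (C' j) := by
  haveI : Nonempty (Fin k) := ⟨⟨0, hk⟩⟩
  rw [← sub_le_iff_le_add']
  refine le_ciInf fun j => ?_
  rw [sub_le_iff_le_add']
  have hb : BddBelow (Set.range fun j : Fin k => frechetDist σ (C' j)) :=
    ⟨0, by rintro x ⟨j, rfl⟩; exact frechetDist_nonneg _ _⟩
  exact (ciInf_le hb j).trans (frechet_triangle hσ hφ (hC' j j.2))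

lemma le_costC {n k : ℕ} (τ C : ℕ → ℝ → ℝ) (i : Fin n) :
    (⨅ j : Fin k, frechetDist (τ ↑i) (C ↑j)) ≤ costC n k τ C := by
  rw [costC]
  exact le_ciSup ((Set.finite_range fun i : Fin n => ⨅ j : Fin k, frechetDist (τ ↑i) (C ↑j)).bddAbove) i

lemma sInf_single_le {k ℓ : ℕ} (hk : 0 < k) (σ : ℝ → ℝ) (C' : ℕ → ℝ → ℝ)
    (hC' : ∀ j, j < k → InDeltaL ℓ (C' j)) :
    sInf {d : ℝ | ∃ c : ℝ → ℝ, InDeltaL ℓ c ∧ d = frechetDist σ c} ≤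
      ⨅ j : Fin k, frechetDist σ (C' j) := by
  haveI : Nonempty (Fin k) := ⟨⟨0, hk⟩⟩
  refine le_ciInf fun j => csInf_le ?_ ⟨C' j, hC' j j.2, rfl⟩
  exact ⟨0, by rintro d ⟨c, _, rfl⟩; exact frechetDist_nonneg _ _⟩


/-- Lemma 6.1: let `τh i ∈ Δ_ℓ` be `α`-approximate minimum-error
`ℓ`-simplifications of the input curves `τ i`, and let `C` be a set of `k` centers
in `Δ_ℓ`. (a) If `C` is a `β`-approximation for the `(k,ℓ)`-center problem on the
simplifications, then `D_∞ = cost_∞(P̂, C) + max_i d_F(τ i, τh i)` satisfies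
`cost_∞(P, C) ≤ D_∞ ≤ (α + β + αβ)·opt^{(∞)}_{k,ℓ}(P)`; (b) analogously for the
`(k,ℓ)`-median problem with sums instead of maxima. -/
theorem const_factor_via_simplification (α β : ℝ) (hα : 0 < α) (hβ : 0 < β)
    (k ℓ n : ℕ) (hk : 0 < k) (hn : 0 < n)
    (τ τh : ℕ → ℝ → ℝ)
    (hτ : ∀ i, i < n → IsPolyCurve (τ i))
    (hτh : ∀ i, i < n → InDeltaL ℓ (τh i) ∧
        frechetDist (τ i) (τh i) ≤
          α * sInf {d : ℝ | ∃ c : ℝ → ℝ, InDeltaL ℓ c ∧ d = frechetDist (τ i) c})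
    (C : ℕ → ℝ → ℝ) (hC : ∀ j, j < k → InDeltaL ℓ (C j)) :
    (costC n k τh C ≤ β * optC n k ℓ τh →
      costC n k τ C ≤ costC n k τh C + (⨆ i : Fin n, frechetDist (τ i) (τh i)) ∧
      costC n k τh C + (⨆ i : Fin n, frechetDist (τ i) (τh i)) ≤
        (α + β + α * β) * optC n k ℓ τ) ∧
    (costM n k τh C ≤ β * optM n k ℓ τh →
      costM n k τ C ≤ costM n k τh C + ∑ i ∈ Finset.range n, frechetDist (τ i) (τh i) ∧
      costM n k τh C + (∑ i ∈ Finset.range n, frechetDist (τ i) (τh i)) ≤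
        (α + β + α * β) * optM n k ℓ τ) := by
  haveI hFk : Nonempty (Fin k) := ⟨⟨0, hk⟩⟩
  haveI hFn : Nonempty (Fin n) := ⟨⟨0, hn⟩⟩
  have hα' := hα.le
  have h1α : (0:ℝ) < 1 + α := by linarith
  have hBdτ : ∀ i, i < n → Bd (τ i) := fun i hi => bd_of_isPolyCurve (hτ i hi)
  have hBdτh : ∀ i, i < n → Bd (τh i) := fun i hi => bd_of_inDeltaL (hτh i hi).1
  have hsymm : ∀ i, i < n → frechetDist (τh i) (τ i) ≤ frechetDist (τ i) (τh i) :=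
    fun i hi => frechet_symm_le (hBdτ i hi) (hBdτh i hi)
  -- generic per-curve facts
  have hTle : ∀ i, i < n → ∀ C' : ℕ → ℝ → ℝ, (∀ j, j < k → InDeltaL ℓ (C' j)) →
      sInf {d : ℝ | ∃ c : ℝ → ℝ, InDeltaL ℓ c ∧ d = frechetDist (τ i) c} ≤
        ⨅ j : Fin k, frechetDist (τ i) (C' j) :=
    fun i _ C' hC' => sInf_single_le hk (τ i) C' hC'
  have hfwd : ∀ i, i < n → ∀ C' : ℕ → ℝ → ℝ, (∀ j, j < k → InDeltaL ℓ (C' j)) →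
      (⨅ j : Fin k, frechetDist (τ i) (C' j)) ≤
        frechetDist (τ i) (τh i) + ⨅ j : Fin k, frechetDist (τh i) (C' j) :=
    fun i hi C' hC' => iInf_le_dist_add hk C' (hBdτ i hi) (hBdτh i hi)
      (fun j hj => bd_of_inDeltaL (hC' j hj))
  have hmin : ∀ i, i < n → ∀ C' : ℕ → ℝ → ℝ, (∀ j, j < k → InDeltaL ℓ (C' j)) →
      (⨅ j : Fin k, frechetDist (τh i) (C' j)) ≤
        (1 + α) * ⨅ j : Fin k, frechetDist (τ i) (C' j) := by
    intro i hi C' hC'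
    have h1 := iInf_le_dist_add hk C' (hBdτh i hi) (hBdτ i hi)
      (fun j hj => bd_of_inDeltaL (hC' j hj))
    have h2 : frechetDist (τh i) (τ i) ≤ α * ⨅ j : Fin k, frechetDist (τ i) (C' j) :=
      (hsymm i hi).trans (((hτh i hi).2).trans
        (mul_le_mul_of_nonneg_left (hTle i hi C' hC') hα'))
    have h3 : (⨅ j : Fin k, frechetDist (τ i) (C' j)) +
        α * (⨅ j : Fin k, frechetDist (τ i) (C' j)) =
        (1 + α) * ⨅ j : Fin k, frechetDist (τ i) (C' j) := by ring
    calc (⨅ j : Fin k, frechetDist (τh i) (C' j))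
        ≤ frechetDist (τh i) (τ i) + ⨅ j : Fin k, frechetDist (τ i) (C' j) := h1
      _ ≤ α * (⨅ j : Fin k, frechetDist (τ i) (C' j)) +
          ⨅ j : Fin k, frechetDist (τ i) (C' j) := add_le_add_left h2 _
      _ = (1 + α) * ⨅ j : Fin k, frechetDist (τ i) (C' j) := by linarith
  constructor
  · -- center case
    intro hb
    have hSd0 : 0 ≤ ⨆ i : Fin n, frechetDist (τ i) (τh i) :=
      Real.iSup_nonneg fun i => frechetDist_nonneg _ _
    have hbddD : BddAbove (Set.range fun i : Fin n => frechetDist (τ ↑i) (τh ↑i)) :=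
      (Set.finite_range _).bddAbove
    have hbddh : BddAbove (Set.range fun i : Fin n => ⨅ j : Fin k, frechetDist (τh ↑i) (C ↑j)) :=
      (Set.finite_range _).bddAbove
    have goal1 : costC n k τ C ≤ costC n k τh C + ⨆ i : Fin n, frechetDist (τ i) (τh i) := by
      refine Real.iSup_le (fun i => ?_) (add_nonneg (costC_nonneg _ _ _ _) hSd0)
      calc (⨅ j : Fin k, frechetDist (τ ↑i) (C ↑j))
          ≤ frechetDist (τ ↑i) (τh ↑i) + ⨅ j : Fin k, frechetDist (τh ↑i) (C ↑j) :=
            hfwd i i.2 C hC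
        _ ≤ (⨆ i : Fin n, frechetDist (τ i) (τh i)) + costC n k τh C :=
            add_le_add (le_ciSup hbddD i) (le_ciSup hbddh i)
        _ = costC n k τh C + ⨆ i : Fin n, frechetDist (τ i) (τh i) := add_comm _ _
    refine ⟨goal1, ?_⟩
    have hoptne : Set.Nonempty {d : ℝ | ∃ C' : ℕ → ℝ → ℝ,
        (∀ j, j < k → InDeltaL ℓ (C' j)) ∧ d = costC n k τ C'} := ⟨costC n k τ C, C, hC, rfl⟩
    have hopt0 : 0 ≤ optC n k ℓ τ := optC_nonneg n k ℓ τ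
    have hTopt : ∀ i : Fin n,
        sInf {d : ℝ | ∃ c : ℝ → ℝ, InDeltaL ℓ c ∧ d = frechetDist (τ ↑i) c} ≤ optC n k ℓ τ := by
      intro i
      refine le_csInf hoptne ?_
      rintro d ⟨C', hC', rfl⟩
      exact (hTle i i.2 C' hC').trans (le_costC τ C' i)
    have hSdle : (⨆ i : Fin n, frechetDist (τ i) (τh i)) ≤ α * optC n k ℓ τ :=
      Real.iSup_le (fun i => ((hτh i i.2).2).trans
        (mul_le_mul_of_nonneg_left (hTopt i) hα')) (mul_nonneg hα' hopt0)
    have hopth : optC n k ℓ τh ≤ (1 + α) * optC n k ℓ τ := by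
      have key : ∀ d ∈ {d : ℝ | ∃ C' : ℕ → ℝ → ℝ,
          (∀ j, j < k → InDeltaL ℓ (C' j)) ∧ d = costC n k τ C'},
          optC n k ℓ τh ≤ (1 + α) * d := by
        rintro d ⟨C', hC', rfl⟩
        have hbl : BddBelow {d : ℝ | ∃ C'' : ℕ → ℝ → ℝ,
            (∀ j, j < k → InDeltaL ℓ (C'' j)) ∧ d = costC n k τh C''} :=
          ⟨0, by rintro x ⟨C'', _, rfl⟩; exact costC_nonneg _ _ _ _⟩
        refine (csInf_le hbl ⟨C', hC', rfl⟩).trans ?_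
        refine Real.iSup_le (fun i => ?_) (mul_nonneg h1α.le (costC_nonneg _ _ _ _))
        exact (hmin i i.2 C' hC').trans (mul_le_mul_of_nonneg_left
          (le_costC τ C' i) h1α.le)
      have h2 : optC n k ℓ τh / (1 + α) ≤ optC n k ℓ τ :=
        le_csInf hoptne fun d hd => (div_le_iff₀ h1α).2 (by rw [mul_comm]; exact key d hd)
      have := (div_le_iff₀ h1α).1 h2
      linarith [this]
    have hfin : costC n k τh C ≤ β * ((1 + α) * optC n k ℓ τ) :=
      hb.trans (mul_le_mul_of_nonneg_left hopth hβ.le)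
    nlinarith [hfin, hSdle]
  · -- median case
    intro hb
    have hSd0 : 0 ≤ ∑ i ∈ Finset.range n, frechetDist (τ i) (τh i) :=
      Finset.sum_nonneg fun i _ => frechetDist_nonneg _ _
    have goal1 : costM n k τ C ≤
        costM n k τh C + ∑ i ∈ Finset.range n, frechetDist (τ i) (τh i) := by
      calc costM n k τ C
          ≤ ∑ i ∈ Finset.range n, (frechetDist (τ i) (τh i) +
              ⨅ j : Fin k, frechetDist (τh i) (C j)) :=
            Finset.sum_le_sum fun i hi => hfwd i (Finset.mem_range.1 hi) C hC
        _ = costM n k τh C + ∑ i ∈ Finset.range n, frechetDist (τ i) (τh i) := by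
            rw [Finset.sum_add_distrib]; rw [costM]; ring
    refine ⟨goal1, ?_⟩
    have hoptne : Set.Nonempty {d : ℝ | ∃ C' : ℕ → ℝ → ℝ,
        (∀ j, j < k → InDeltaL ℓ (C' j)) ∧ d = costM n k τ C'} := ⟨costM n k τ C, C, hC, rfl⟩
    have hopt0 : 0 ≤ optM n k ℓ τ := optM_nonneg n k ℓ τ
    have hTopt : (∑ i ∈ Finset.range n,
        sInf {d : ℝ | ∃ c : ℝ → ℝ, InDeltaL ℓ c ∧ d = frechetDist (τ i) c}) ≤ optM n k ℓ τ := by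
      refine le_csInf hoptne ?_
      rintro d ⟨C', hC', rfl⟩
      exact Finset.sum_le_sum fun i hi => hTle i (Finset.mem_range.1 hi) C' hC'
    have hSdle : (∑ i ∈ Finset.range n, frechetDist (τ i) (τh i)) ≤ α * optM n k ℓ τ := by
      calc (∑ i ∈ Finset.range n, frechetDist (τ i) (τh i))
          ≤ ∑ i ∈ Finset.range n, α *
              sInf {d : ℝ | ∃ c : ℝ → ℝ, InDeltaL ℓ c ∧ d = frechetDist (τ i) c} :=
            Finset.sum_le_sum fun i hi => (hτh i (Finset.mem_range.1 hi)).2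
        _ = α * ∑ i ∈ Finset.range n,
              sInf {d : ℝ | ∃ c : ℝ → ℝ, InDeltaL ℓ c ∧ d = frechetDist (τ i) c} := by
            rw [Finset.mul_sum]
        _ ≤ α * optM n k ℓ τ := mul_le_mul_of_nonneg_left hTopt hα'
    have hopth : optM n k ℓ τh ≤ (1 + α) * optM n k ℓ τ := by
      have key : ∀ d ∈ {d : ℝ | ∃ C' : ℕ → ℝ → ℝ,
          (∀ j, j < k → InDeltaL ℓ (C' j)) ∧ d = costM n k τ C'},
          optM n k ℓ τh ≤ (1 + α) * d := by
        rintro d ⟨C', hC', rfl⟩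
        have hbl : BddBelow {d : ℝ | ∃ C'' : ℕ → ℝ → ℝ,
            (∀ j, j < k → InDeltaL ℓ (C'' j)) ∧ d = costM n k τh C''} :=
          ⟨0, by rintro x ⟨C'', _, rfl⟩; exact costM_nonneg _ _ _ _⟩
        refine (csInf_le hbl ⟨C', hC', rfl⟩).trans ?_
        calc costM n k τh C'
            ≤ ∑ i ∈ Finset.range n, (1 + α) * ⨅ j : Fin k, frechetDist (τ i) (C' j) :=
              Finset.sum_le_sum fun i hi => hmin i (Finset.mem_range.1 hi) C' hC'
          _ = (1 + α) * costM n k τ C' := by rw [← Finset.mul_sum]; rfl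
      have h2 : optM n k ℓ τh / (1 + α) ≤ optM n k ℓ τ :=
        le_csInf hoptne fun d hd => (div_le_iff₀ h1α).2 (by rw [mul_comm]; exact key d hd)
      have := (div_le_iff₀ h1α).1 h2
      linarith [this]
    have hfin : costM n k τh C ≤ β * ((1 + α) * optM n k ℓ τ) :=
      hb.trans (mul_le_mul_of_nonneg_left hopth hβ.le)
    nlinarith [hfin, hSdle]
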